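/- Let u and v be non-isotropic cycles with ⟨u, v⟩ = 0. If m ∈ E lies in the zero set of v, then the conjugate point m' of m with respect to u also lies in the zero set of v. -/

import Mathlib

/-- If `u` and `v` are non-isotropic cycles with `⟨u,v⟩ = 0` and `m` lies in the zero
set of `v`, then the conjugate point `m'` of `m` with respect to `u` also lies in the
zero set of `v`. -/
theorem stmt_15 {k : Type*} [Field k] (hchar : (2 : k) ≠ 0)
    {E : Type*} [AddCommGroup E] [Module k E]
    (B : LinearMap.BilinForm k E) (hB : B.IsSymm)
    (haniso : ∀ x : E, B x x = 0 → x = 0)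
    (cyc : (k × E × k) → (k × E × k) → k)
    (hcyc : ∀ p q : k × E × k,
      cyc p q = B p.2.1 q.2.1 - 2 * p.1 * q.2.2 - 2 * q.1 * p.2.2)
    (u v : k × E × k) (hu : cyc u u ≠ 0) (hv : cyc v v ≠ 0)
    (horth : cyc u v = 0)
    (m m' : E)
    -- `m'` is the conjugate of `m` with respect to `u`:
    (hconj : ∃ lam : k, lam ≠ 0 ∧
      ((1 : k), -((2 : k) • m), B m m) -
          (2 * (cyc ((1 : k), -((2 : k) • m), B m m) u / cyc u u)) • u
        = lam • ((1 : k), -((2 : k) • m'), B m' m'))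
    (hm : v.1 * B m m + B v.2.1 m + v.2.2 = 0) :
    v.1 * B m' m' + B v.2.1 m' + v.2.2 = 0 := by
  obtain ⟨lam, hlam, heq⟩ := hconj
  set c : k := 2 * (cyc ((1 : k), -((2 : k) • m), B m m) u / cyc u u) with hc
  have h1 : (1 : k) - c * u.1 = lam * 1 := congrArg Prod.fst heq
  have h3 : B m m - c * u.2.2 = lam * B m' m' :=
    congrArg (fun p => p.2.2) heq
  have h2 : -((2 : k) • m) - c • u.2.1 = lam • (-((2 : k) • m')) :=
    congrArg (fun p => p.2.1) heq
  have b2 : B v.2.1 (-((2 : k) • m)) - c * B v.2.1 u.2.1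
      = lam * B v.2.1 (-((2 : k) • m')) := by
    have := congrArg (fun x => B v.2.1 x) h2
    simpa [map_sub, map_smul, smul_eq_mul] using this
  have b2' : -(2 * B v.2.1 m) - c * B v.2.1 u.2.1
      = lam * (-(2 * B v.2.1 m')) := by
    simpa [map_neg, map_smul, smul_eq_mul] using b2
  have hsymm : B u.2.1 v.2.1 = B v.2.1 u.2.1 := hB.eq u.2.1 v.2.1
  have horth' : B u.2.1 v.2.1 - 2 * u.1 * v.2.2 - 2 * v.1 * u.2.2 = 0 := by
    rw [← hcyc]; exact horth
  have key : lam * (-2) * (v.1 * B m' m' + B v.2.1 m' + v.2.2) = 0 := by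
    linear_combination (2 * v.1) * h3 - b2' + (2 * v.2.2) * h1
      + (-2) * hm + (-c) * horth' + c * hsymm
  have hne : lam * (-2 : k) ≠ 0 := by
    refine mul_ne_zero hlam ?_
    simpa using neg_ne_zero.mpr hchar
  exact (mul_eq_zero.mp key).resolve_left hne
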